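/- For every k ≥ 2 and every index i, the function h ↦ LN_{k+1}(h)_i − LN_k(h)_i is O(h³) as h → 0 from the right; i.e., each additional linear-neighbour iteration modifies only terms of order at least three in the step size (Appendix A, point D). -/

import Mathlib

open Finset NormedSpace Asymptotics

/-- `aCoef M Q v i = Σ_{j≠i} M_ij v_j + Q_i`. -/
noncomputable def aCoef {N : ℕ} (M : Matrix (Fin N) (Fin N) ℝ) (Q : Fin N → ℝ)
    (v : Fin N → ℝ) (i : Fin N) : ℝ :=
  (∑ j ∈ Finset.univ.erase i, M i j * v j) + Q i

/-- The constant-neighbour step `F_h`. -/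
noncomputable def cnStep {N : ℕ} (M : Matrix (Fin N) (Fin N) ℝ) (Q u0 : Fin N → ℝ)
    (h : ℝ) (v : Fin N → ℝ) : Fin N → ℝ :=
  fun i => u0 i * Real.exp (M i i * h)
    + (aCoef M Q v i / (-(M i i))) * (1 - Real.exp (M i i * h))

/-- The `k`-stage constant-neighbour approximation `CN_k(h) = F_h^[k] u⁰`. -/
noncomputable def CN {N : ℕ} (M : Matrix (Fin N) (Fin N) ℝ) (Q u0 : Fin N → ℝ)
    (k : ℕ) (h : ℝ) : Fin N → ℝ :=
  (cnStep M Q u0 h)^[k] u0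

/-- The effective slope `s_i(v) = (a_i(v) − a_i(u⁰))/h`. -/
noncomputable def sCoef {N : ℕ} (M : Matrix (Fin N) (Fin N) ℝ) (Q u0 : Fin N → ℝ)
    (h : ℝ) (v : Fin N → ℝ) (i : Fin N) : ℝ :=
  (aCoef M Q v i - aCoef M Q u0 i) / h

/-- The linear-neighbour step `G_h`, with `τ_i = −1/M_ii`. -/
noncomputable def lnStep {N : ℕ} (M : Matrix (Fin N) (Fin N) ℝ) (Q u0 : Fin N → ℝ)
    (h : ℝ) (v : Fin N → ℝ) : Fin N → ℝ :=
  fun i =>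
    u0 i * Real.exp (M i i * h)
      + (aCoef M Q u0 i * (-(M i i)⁻¹) - sCoef M Q u0 h v i * (-(M i i)⁻¹) ^ 2)
          * (1 - Real.exp (M i i * h))
      + sCoef M Q u0 h v i * (-(M i i)⁻¹) * h

/-- The `k`-stage linear-neighbour approximation `LN_k(h) = G_h^[k−1] (CN_1(h))`, `k ≥ 2`. -/
noncomputable def LN {N : ℕ} (M : Matrix (Fin N) (Fin N) ℝ) (Q u0 : Fin N → ℝ)
    (k : ℕ) (h : ℝ) : Fin N → ℝ :=
  (lnStep M Q u0 h)^[k - 1] (cnStep M Q u0 h u0)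

/-- The exact solution `u_ex(h) = e^{hM} u⁰ + ∫₀^h e^{(h−s)M} Q ds`. -/
noncomputable def uex {N : ℕ} (M : Matrix (Fin N) (Fin N) ℝ) (Q u0 : Fin N → ℝ)
    (h : ℝ) : Fin N → ℝ :=
  (exp (h • M)).mulVec u0 + ∫ s in (0:ℝ)..h, (exp ((h - s) • M)).mulVec Q


open Filter in
private lemma pow_isBigO_pow' {m n : ℕ} (hmn : m ≤ n) :
    (fun h : ℝ => h ^ n) =O[nhdsWithin 0 (Set.Ioi 0)] fun h => h ^ m := by
  rw [Asymptotics.isBigO_iff]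
  refine ⟨1, ?_⟩
  filter_upwards [Ioo_mem_nhdsGT_of_mem (by simp : (0:ℝ) ∈ Set.Ico (0:ℝ) 1)] with h hh
  rw [Real.norm_eq_abs, Real.norm_eq_abs, abs_pow, abs_pow, abs_of_pos hh.1, one_mul]
  exact pow_le_pow_of_le_one (le_of_lt hh.1) (le_of_lt hh.2) hmn

open Filter in
private lemma exp2' (c : ℝ) :
    (fun h : ℝ => Real.exp (c*h) - 1 - c*h) =O[nhdsWithin 0 (Set.Ioi 0)] fun h => h ^ 2 := by
  rw [Asymptotics.isBigO_iff]
  refine ⟨c^2, ?_⟩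
  have hcont : Continuous (fun h : ℝ => c * h) := by continuity
  have htend : Filter.Tendsto (fun h : ℝ => c * h) (nhdsWithin 0 (Set.Ioi 0)) (nhds 0) :=
    (hcont.tendsto' 0 0 (by simp)).mono_left nhdsWithin_le_nhds
  filter_upwards [htend.eventually (eventually_abs_sub_lt 0 one_pos)] with h hh
  rw [sub_zero] at hh
  have hb := Real.exp_bound (x := c*h) (le_of_lt hh) (n := 2) (by norm_num)
  norm_num [Finset.sum_range_succ, Nat.factorial] at hb
  have h1 : ‖Real.exp (c*h) - 1 - c*h‖ = |Real.exp (c*h) - (1 + c*h)| := by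
    rw [Real.norm_eq_abs]; ring_nf
  rw [h1]
  refine le_trans hb ?_
  rw [Real.norm_eq_abs, abs_of_nonneg (sq_nonneg h), mul_pow, sq_abs, sq_abs]
  nlinarith [mul_nonneg (sq_nonneg c) (sq_nonneg h)]

private lemma exp1' (c : ℝ) :
    (fun h : ℝ => Real.exp (c*h) - 1) =O[nhdsWithin 0 (Set.Ioi 0)] fun h => h ^ 1 := by
  have h1 : (fun h : ℝ => Real.exp (c*h) - 1)
      = fun h => (Real.exp (c*h) - 1 - c*h) + c * h := by funext h; ring
  rw [h1]
  refine Asymptotics.IsBigO.add ((exp2' c).trans (pow_isBigO_pow' one_le_two)) ?_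
  have : (fun h : ℝ => c * h) =O[nhdsWithin 0 (Set.Ioi 0)] fun h : ℝ => h :=
    (Asymptotics.isBigO_refl (fun h : ℝ => h) _).const_mul_left c
  simpa [pow_one] using this

/-- `φ_i(h) = τ_i h − τ_i² (1 − e^{M_ii h})`. -/
private noncomputable def phiF {N : ℕ} (M : Matrix (Fin N) (Fin N) ℝ) (i : Fin N) (h : ℝ) : ℝ :=
  (-(M i i)⁻¹) * h - (-(M i i)⁻¹) ^ 2 * (1 - Real.exp (M i i * h))

private lemma phi_isBigO {N : ℕ} {M : Matrix (Fin N) (Fin N) ℝ} {i : Fin N}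
    (hMi : M i i < 0) :
    (fun h => phiF M i h) =O[nhdsWithin 0 (Set.Ioi 0)] fun h : ℝ => h ^ 2 := by
  have hc : M i i ≠ 0 := ne_of_lt hMi
  have heq : (fun h => phiF M i h)
      = fun h => ((M i i)⁻¹) ^ 2 * (Real.exp (M i i * h) - 1 - M i i * h) := by
    funext h; simp only [phiF]; field_simp; ring
  rw [heq]
  exact (exp2' (M i i)).const_mul_left _

private lemma aCoef_sub {N : ℕ} (M : Matrix (Fin N) (Fin N) ℝ) (Q : Fin N → ℝ)
    (v w : Fin N → ℝ) (i : Fin N) :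
    aCoef M Q v i - aCoef M Q w i = ∑ j ∈ Finset.univ.erase i, M i j * (v j - w j) := by
  simp only [aCoef, mul_sub, Finset.sum_sub_distrib]; ring

private lemma lnStep_sub_cn {N : ℕ} (M : Matrix (Fin N) (Fin N) ℝ) (Q u0 : Fin N → ℝ)
    (h : ℝ) (v : Fin N → ℝ) (i : Fin N) :
    lnStep M Q u0 h v i - cnStep M Q u0 h u0 i
      = (∑ j ∈ Finset.univ.erase i, M i j * (v j - u0 j)) * phiF M i h / h := by
  rw [← aCoef_sub]
  simp only [lnStep, cnStep, sCoef, phiF, div_eq_mul_inv, inv_neg]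
  ring

private lemma lnStep_sub {N : ℕ} (M : Matrix (Fin N) (Fin N) ℝ) (Q u0 : Fin N → ℝ)
    (h : ℝ) (v w : Fin N → ℝ) (i : Fin N) :
    lnStep M Q u0 h v i - lnStep M Q u0 h w i
      = (∑ j ∈ Finset.univ.erase i, M i j * (v j - w j)) * phiF M i h / h := by
  rw [← aCoef_sub]
  simp only [lnStep, sCoef, phiF, div_eq_mul_inv]
  ring

private lemma cn_sub {N : ℕ} (M : Matrix (Fin N) (Fin N) ℝ) (Q u0 : Fin N → ℝ)
    (h : ℝ) (l : Fin N) :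
    cnStep M Q u0 h u0 l - u0 l
      = (u0 l - aCoef M Q u0 l / (-(M l l))) * (Real.exp (M l l * h) - 1) := by
  simp only [cnStep]; ring

open Filter in
private lemma mul_phi_div {N : ℕ} {M : Matrix (Fin N) (Fin N) ℝ} {i : Fin N}
    (hMi : M i i < 0) {f : ℝ → ℝ} {m : ℕ}
    (hf : f =O[nhdsWithin 0 (Set.Ioi 0)] fun h => h ^ (m+1)) :
    (fun h => f h * phiF M i h / h) =O[nhdsWithin 0 (Set.Ioi 0)] fun h => h ^ (m+2) := by
  have h1 : (fun h => f h * phiF M i h * h⁻¹)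
      =O[nhdsWithin 0 (Set.Ioi 0)] fun h : ℝ => h ^ (m+1) * h ^ 2 * h⁻¹ :=
    (hf.mul (phi_isBigO hMi)).mul (Asymptotics.isBigO_refl _ _)
  have h2 : (fun h : ℝ => h ^ (m+1) * h ^ 2 * h⁻¹)
      =ᶠ[nhdsWithin 0 (Set.Ioi 0)] fun h => h ^ (m+2) := by
    filter_upwards [eventually_mem_nhdsWithin] with h hh
    have hne : h ≠ 0 := ne_of_gt hh
    field_simp
    ring
  simpa [div_eq_mul_inv] using h1.trans h2.isBigO

private lemma D_isBigO {N : ℕ} (M : Matrix (Fin N) (Fin N) ℝ) (hM : ∀ i, M i i < 0)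
    (Q u0 : Fin N → ℝ) :
    ∀ k : ℕ, ∀ i : Fin N,
      (fun h : ℝ => (lnStep M Q u0 h)^[k+1] (cnStep M Q u0 h u0) i
        - (lnStep M Q u0 h)^[k] (cnStep M Q u0 h u0) i)
        =O[nhdsWithin 0 (Set.Ioi 0)] fun h => h ^ (k+2) := by
  intro k
  induction k with
  | zero =>
    intro i
    have heq : (fun h : ℝ => (lnStep M Q u0 h)^[0+1] (cnStep M Q u0 h u0) i
          - (lnStep M Q u0 h)^[0] (cnStep M Q u0 h u0) i)
        = fun h => (∑ j ∈ Finset.univ.erase i,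
            M i j * (cnStep M Q u0 h u0 j - u0 j)) * phiF M i h / h := by
      funext h
      rw [Function.iterate_one, Function.iterate_zero_apply]
      exact lnStep_sub_cn M Q u0 h _ i
    rw [heq]
    refine mul_phi_div (hM i) (Asymptotics.IsBigO.fun_sum ?_)
    intro j _
    have h3 : (fun h => M i j * (cnStep M Q u0 h u0 j - u0 j))
        = fun h => (M i j * (u0 j - aCoef M Q u0 j / (-(M j j))))
            * (Real.exp (M j j * h) - 1) := by
      funext h; rw [cn_sub]; ring
    rw [h3]
    exact (exp1' (M j j)).const_mul_left _
  | succ k ih =>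
    intro i
    have heq : (fun h : ℝ => (lnStep M Q u0 h)^[k+1+1] (cnStep M Q u0 h u0) i
          - (lnStep M Q u0 h)^[k+1] (cnStep M Q u0 h u0) i)
        = fun h => (∑ j ∈ Finset.univ.erase i,
            M i j * ((lnStep M Q u0 h)^[k+1] (cnStep M Q u0 h u0) j
              - (lnStep M Q u0 h)^[k] (cnStep M Q u0 h u0) j)) * phiF M i h / h := by
      funext h
      rw [Function.iterate_succ_apply' _ (k+1), Function.iterate_succ_apply' _ k]
      exact lnStep_sub M Q u0 h _ _ i
    rw [heq]
    refine mul_phi_div (hM i) (Asymptotics.IsBigO.fun_sum ?_)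
    intro j _
    exact ((ih j).const_mul_left _)

/-- Appendix A, point D: each additional linear-neighbour iteration modifies only
terms of order at least three: `LN_{k+1}(h) − LN_k(h) = O(h³)` as `h → 0⁺`. -/
theorem ln_iteration_difference_third_order {N : ℕ} (hN : 1 ≤ N)
    (M : Matrix (Fin N) (Fin N) ℝ) (hM : ∀ i, M i i < 0) (Q u0 : Fin N → ℝ)
    (k : ℕ) (hk : 2 ≤ k) (i : Fin N) :
    (fun h : ℝ => LN M Q u0 (k + 1) h i - LN M Q u0 k h i)
      =O[nhdsWithin 0 (Set.Ioi 0)] fun h : ℝ => h ^ 3 := by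
  obtain ⟨m, rfl⟩ : ∃ m, k = m + 2 := ⟨k - 2, by omega⟩
  have hD := D_isBigO M hM Q u0 (m+1) i
  have heq : (fun h : ℝ => LN M Q u0 (m+2+1) h i - LN M Q u0 (m+2) h i)
      = fun h : ℝ => (lnStep M Q u0 h)^[m+1+1] (cnStep M Q u0 h u0) i
          - (lnStep M Q u0 h)^[m+1] (cnStep M Q u0 h u0) i := by
    funext h
    simp only [LN]
    norm_num
  rw [heq]
  exact hD.trans (pow_isBigO_pow' (by omega))
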